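/- For a binary species tree σ on X and distinct a, b ∈ X, the set {a,b} is a clade of σ if and only if for every D ⊆ X∖{a,b}, P_σ({A}∪D_g) = P_σ({B}∪D_g). Hence 2-clades of the species tree are identifiable from clade probabilities for all positive edge lengths. -/

import Mathlib

/-- Rooted binary trees with leaves labelled by `α`. -/
inductive RTree (α : Type) where
  | leaf : α → RTree α
  | node : RTree α → RTree α → RTree α

variable {α : Type} [DecidableEq α]

def RTree.leaves : RTree α → Finset α
  | .leaf x => {x}
  | .node l r => l.leaves ∪ r.leaves

def RTree.distinctLabels : RTree α → Prop
  | .leaf _ => True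
  | .node l r => l.distinctLabels ∧ r.distinctLabels ∧ Disjoint l.leaves r.leaves

def RTree.clades : RTree α → Finset (Finset α)
  | .leaf x => {{x}}
  | .node l r => l.clades ∪ r.clades ∪ {l.leaves ∪ r.leaves}

/-- 2-clades of a binary species tree are identifiable from gene-tree clade
probabilities.  `P` denotes the clade probabilities under the multispecies coalescent on
the binary species tree `σ = (ψ, ℓ)` with strictly positive internal edge lengths; the
model is abstracted by the two facts: (i) the cherry-swapping invariant, and (ii) the
taxon-swap lemma.  Then for distinct `a, b ∈ X`, `{a,b}` is a clade of `ψ` iff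
`P({A}∪D_g) = P({B}∪D_g)` for every `D ⊆ X∖{a,b}`. -/
lemma RTree.leaves_nonempty (t : RTree α) : t.leaves.Nonempty := by
  induction t with
  | leaf x => exact ⟨x, by simp [RTree.leaves]⟩
  | node l r ihl ihr => exact ihl.mono (by simp [RTree.leaves, Finset.subset_union_left])

lemma RTree.leaves_mem_clades (t : RTree α) : t.leaves ∈ t.clades := by
  cases t with
  | leaf x => simp [RTree.leaves, RTree.clades]
  | node l r => simp [RTree.leaves, RTree.clades]

lemma RTree.clade_subset_leaves (t : RTree α) {C : Finset α} (h : C ∈ t.clades) :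
    C ⊆ t.leaves := by
  induction t with
  | leaf x => simp [RTree.clades] at h; simp [h, RTree.leaves]
  | node l r ihl ihr =>
      simp only [RTree.clades, Finset.mem_union, Finset.mem_singleton] at h
      rcases h with (h | h) | h
      · exact (ihl h).trans (by simp [RTree.leaves])
      · exact (ihr h).trans (by simp [RTree.leaves])
      · simp [h, RTree.leaves]

lemma RTree.exists_sep (t : RTree α) (hD : t.distinctLabels) (a b : α)
    (ha : a ∈ t.leaves) (hb : b ∈ t.leaves) (hab : a ≠ b)
    (hnc : ({a, b} : Finset α) ∉ t.clades) :
    ∃ C ∈ t.clades, 2 ≤ C.card ∧ ((a ∈ C ∧ b ∉ C) ∨ (b ∈ C ∧ a ∉ C)) := by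
  induction t with
  | leaf x =>
      simp [RTree.leaves] at ha hb; exact absurd (ha.trans hb.symm) hab
  | node l r ihl ihr =>
      obtain ⟨hdl, hdr, hdisj⟩ := hD
      have hlc : ∀ C ∈ l.clades, C ∈ (RTree.node l r).clades := by
        intro C hC; simp [RTree.clades]; tauto
      have hrc : ∀ C ∈ r.clades, C ∈ (RTree.node l r).clades := by
        intro C hC; simp [RTree.clades]; tauto
      simp [RTree.leaves] at ha hb
      rcases ha with ha | ha <;> rcases hb with hb | hb
      · obtain ⟨C, hC, h2, hsep⟩ := ihl hdl ha hb (fun h => hnc (hlc _ h))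
        exact ⟨C, hlc _ hC, h2, hsep⟩
      · -- a ∈ l, b ∈ r
        by_cases h2l : 2 ≤ l.leaves.card
        · exact ⟨l.leaves, hlc _ l.leaves_mem_clades, h2l,
            Or.inl ⟨ha, Finset.disjoint_right.mp hdisj hb⟩⟩
        · by_cases h2r : 2 ≤ r.leaves.card
          · exact ⟨r.leaves, hrc _ r.leaves_mem_clades, h2r,
              Or.inr ⟨hb, fun hx => Finset.disjoint_left.mp hdisj ha hx⟩⟩
          · exfalso
            have hl1 : l.leaves = {a} := by
              have := Finset.eq_singleton_iff_unique_mem.mpr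
                ⟨ha, fun x hx => ?_⟩
              · exact this
              · by_contra hxa
                have : 2 ≤ l.leaves.card := Finset.one_lt_card.mpr ⟨x, hx, a, ha, hxa⟩
                exact h2l this
            have hr1 : r.leaves = {b} := by
              have := Finset.eq_singleton_iff_unique_mem.mpr
                ⟨hb, fun x hx => ?_⟩
              · exact this
              · by_contra hxb
                have : 2 ≤ r.leaves.card := Finset.one_lt_card.mpr ⟨x, hx, b, hb, hxb⟩
                exact h2r this
            apply hnc
            have : ({a, b} : Finset α) = l.leaves ∪ r.leaves := by
              rw [hl1, hr1]; ext x; simp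
            rw [this]
            simp [RTree.clades]
      · -- a ∈ r, b ∈ l
        by_cases h2l : 2 ≤ l.leaves.card
        · exact ⟨l.leaves, hlc _ l.leaves_mem_clades, h2l,
            Or.inr ⟨hb, Finset.disjoint_right.mp hdisj ha⟩⟩
        · by_cases h2r : 2 ≤ r.leaves.card
          · exact ⟨r.leaves, hrc _ r.leaves_mem_clades, h2r,
              Or.inl ⟨ha, fun hx => Finset.disjoint_left.mp hdisj hb hx⟩⟩
          · exfalso
            have hl1 : l.leaves = {b} := by
              have := Finset.eq_singleton_iff_unique_mem.mpr ⟨hb, fun x hx => ?_⟩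
              · exact this
              · by_contra hxb
                exact h2l (Finset.one_lt_card.mpr ⟨x, hx, b, hb, hxb⟩)
            have hr1 : r.leaves = {a} := by
              have := Finset.eq_singleton_iff_unique_mem.mpr ⟨ha, fun x hx => ?_⟩
              · exact this
              · by_contra hxa
                exact h2r (Finset.one_lt_card.mpr ⟨x, hx, a, ha, hxa⟩)
            apply hnc
            have : ({a, b} : Finset α) = l.leaves ∪ r.leaves := by
              rw [hl1, hr1]; ext x; simp; tauto
            rw [this]; simp [RTree.clades]
      · obtain ⟨C, hC, h2, hsep⟩ := ihr hdr ha hb (fun h => hnc (hrc _ h))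
        exact ⟨C, hrc _ hC, h2, hsep⟩

theorem two_clades_identifiable
    (X : Finset α) (ψ : RTree α) (hL : ψ.leaves = X) (hD : ψ.distinctLabels)
    (ℓ : Finset α → ℝ)
    (hlen : ∀ E ∈ ψ.clades, 2 ≤ E.card → E ≠ X → 0 < ℓ E)
    (P : Finset α → ℝ)
    (hcherry : ∀ x y : α, x ≠ y → ({x, y} : Finset α) ∈ ψ.clades →
      ∀ D ⊆ X \ {x, y}, P (insert x D) = P (insert y D))
    (hswap : ∀ Cl ∈ ψ.clades, 2 ≤ Cl.card → Cl ≠ X →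
      ∀ x ∈ Cl, ∀ y ∈ X \ Cl, P (insert y (Cl.erase x)) < P Cl)
    (a b : α) (ha : a ∈ X) (hb : b ∈ X) (hab : a ≠ b) :
    ({a, b} : Finset α) ∈ ψ.clades ↔
      ∀ D ⊆ X \ {a, b}, P (insert a D) = P (insert b D) := by
  constructor
  · intro hc D hDsub
    exact hcherry a b hab hc D hDsub
  · intro h
    by_contra hnc
    obtain ⟨C, hC, h2, hsep⟩ := ψ.exists_sep hD a b (hL ▸ ha) (hL ▸ hb) hab hnc
    have hCX : C ⊆ X := hL ▸ ψ.clade_subset_leaves hC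
    rcases hsep with ⟨haC, hbC⟩ | ⟨hbC, haC⟩
    · have hCne : C ≠ X := fun h' => hbC (h' ▸ hb)
      have hlt := hswap C hC h2 hCne a haC b (Finset.mem_sdiff.mpr ⟨hb, hbC⟩)
      have hDsub : C.erase a ⊆ X \ {a, b} := by
        intro x hx
        rw [Finset.mem_erase] at hx
        refine Finset.mem_sdiff.mpr ⟨hCX hx.2, ?_⟩
        simp only [Finset.mem_insert, Finset.mem_singleton, not_or]
        exact ⟨hx.1, fun hxb => hbC (hxb ▸ hx.2)⟩
      have heq := h _ hDsub
      rw [Finset.insert_erase haC] at heq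
      linarith
    · have hCne : C ≠ X := fun h' => haC (h' ▸ ha)
      have hlt := hswap C hC h2 hCne b hbC a (Finset.mem_sdiff.mpr ⟨ha, haC⟩)
      have hDsub : C.erase b ⊆ X \ {a, b} := by
        intro x hx
        rw [Finset.mem_erase] at hx
        refine Finset.mem_sdiff.mpr ⟨hCX hx.2, ?_⟩
        simp only [Finset.mem_insert, Finset.mem_singleton, not_or]
        exact ⟨fun hxa => haC (hxa ▸ hx.2), hx.1⟩
      have heq := h _ hDsub
      rw [Finset.insert_erase hbC] at heq
      linarith
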